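/- arXiv:2010.07057 — 2 statements merged into one kernel-verified Lean document; each statement's English description precedes it below -/
import Mathlib

section
/- Let v : Fin m → α be a vector, b' : Fin m → Prop a boolean vector, and q : α → Prop a predicate. Then selecting additionally by the pointwise evaluation of q on v equals filtering the choice set by q: choice(v, fun i => q (v i) ∧ b' i) = {x ∈ choice(v, b') | q x}. -/
/-- The choice function: the set of entries of `v` selected by the boolean vector `b`. -/
def choice {α : Type*} {m : ℕ} (v : Fin m → α) (b : Fin m → Prop) : Set α :=
  {x | ∃ i : Fin m, b i ∧ v i = x}

theorem choice_filter {α : Type*} {m : ℕ} (v : Fin m → α) (b' : Fin m → Prop)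
    (q : α → Prop) :
    choice v (fun i => q (v i) ∧ b' i) = {x ∈ choice v b' | q x} := by
  ext x
  constructor
  · rintro ⟨i, ⟨hq, hb⟩, rfl⟩
    exact ⟨⟨i, hb, rfl⟩, hq⟩
  · rintro ⟨⟨i, hb, rfl⟩, hq⟩
    exact ⟨i, ⟨hq, hb⟩, rfl⟩
end

section
/- Let b, b' : Fin n → Bool be two boolean vectors containing the same number of true entries, i.e. the cardinality of {i | b i = true} equals the cardinality of {i | b' i = true}. Then the distributions of the uniformly shuffled vectors coincide: PMF.map (fun σ => b ∘ σ) (PMF.uniformOfFintype (Equiv.Perm (Fin n))) = PMF.map (fun σ => b' ∘ σ) (PMF.uniformOfFintype (Equiv.Perm (Fin n))). -/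
lemma map_equiv_uniform {α : Type*} [Fintype α] [Nonempty α] [DecidableEq α] (e : α ≃ α) :
    PMF.map e (PMF.uniformOfFintype α) = PMF.uniformOfFintype α := by
  ext a
  rw [PMF.map_apply]
  rw [tsum_eq_single (e.symm a) (by
    intro x hx
    simp only [PMF.uniformOfFintype_apply]
    rw [if_neg]
    intro hax
    exact hx (by rw [hax, Equiv.symm_apply_apply]))]
  simp

theorem shuffle_bits_invariant {n : ℕ} (b b' : Fin n → Bool)
    (h : (Finset.univ.filter fun i => b i = true).card =
         (Finset.univ.filter fun i => b' i = true).card) :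
    PMF.map (fun σ : Equiv.Perm (Fin n) => b ∘ σ)
        (PMF.uniformOfFintype (Equiv.Perm (Fin n))) =
      PMF.map (fun σ : Equiv.Perm (Fin n) => b' ∘ σ)
        (PMF.uniformOfFintype (Equiv.Perm (Fin n))) := by
  have hcard1 : Fintype.card {i : Fin n // b' i = true} = Fintype.card {i : Fin n // b i = true} := by
    simp only [Fintype.card_subtype]
    exact h.symm
  have hcard2 : Fintype.card {i : Fin n // ¬ b' i = true} = Fintype.card {i : Fin n // ¬ b i = true} := by
    have h1 := Fintype.card_subtype_compl (fun i : Fin n => b i = true)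
    have h2 := Fintype.card_subtype_compl (fun i : Fin n => b' i = true)
    rw [h1, h2, hcard1]
  obtain ⟨e1⟩ := Fintype.card_eq.mp hcard1
  obtain ⟨e2⟩ := Fintype.card_eq.mp hcard2
  set τ : Fin n ≃ Fin n :=
    ((Equiv.sumCompl (fun i : Fin n => b' i = true)).symm.trans
      ((e1.sumCongr e2).trans (Equiv.sumCompl (fun i : Fin n => b i = true))))
  have hτ : ∀ x, b (τ x) = b' x := by
    intro x
    by_cases hx : b' x = true
    · have ht : τ x = (e1 ⟨x, hx⟩ : {i // b i = true}) := by
        simp [τ, Equiv.sumCompl, hx]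
      rw [ht, hx]
      exact (e1 ⟨x, hx⟩).2
    · have ht : τ x = (e2 ⟨x, hx⟩ : {i // ¬ b i = true}) := by
        simp [τ, Equiv.sumCompl, hx]
      rw [ht]
      have h1 : ¬ b (e2 ⟨x, hx⟩) = true := (e2 ⟨x, hx⟩).2
      have h2 : ¬ b' x = true := hx
      simp only [Bool.not_eq_true] at h1 h2
      rw [h1, h2]
  have hb' : b ∘ τ = b' := funext hτ
  have key : (fun σ : Equiv.Perm (Fin n) => b' ∘ σ) =
      (fun σ : Equiv.Perm (Fin n) => b ∘ σ) ∘ ⇑(Equiv.mulLeft τ) := by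
    funext σ
    simp only [Function.comp]
    rw [← hb']
    rfl
  rw [key, ← PMF.map_comp, map_equiv_uniform]
end
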